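/- arXiv:2408.04871 — 3 statements merged into one kernel-verified Lean document; each statement's English description precedes it below -/
import Mathlib

section
/- Let A be a real symmetric positive semidefinite N×N matrix and f ∈ ℝ^N such that the system A q = f is solvable, and let q⁰ ∈ ℝ^N. For every α > 0 the regularized system (A + α I) q = f + α q⁰ has a unique solution q^α, and q^α converges, as α → 0⁺, to the solution of A q = f that is closest in Euclidean norm to q⁰ (the normal solution relative to q⁰). -/
open Matrix RealInnerProductSpace

/-- Matrix–vector multiplication as a map between Euclidean spaces. -/
noncomputable def mulE {K N : ℕ} (A : Matrix (Fin K) (Fin N) ℝ)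
    (v : EuclideanSpace ℝ (Fin N)) : EuclideanSpace ℝ (Fin K) :=
  Matrix.toEuclideanLin A v

variable {N : ℕ}

lemma mulE_mul (A B : Matrix (Fin N) (Fin N) ℝ) (v : EuclideanSpace ℝ (Fin N)) :
    mulE (A * B) v = mulE A (mulE B v) := by
  simp [mulE, Matrix.toEuclideanLin_apply, Matrix.mulVec_mulVec]

lemma mulE_one (v : EuclideanSpace ℝ (Fin N)) : mulE 1 v = v := by
  simp [mulE, Matrix.toEuclideanLin_apply]

lemma mulE_add (A B : Matrix (Fin N) (Fin N) ℝ) (v : EuclideanSpace ℝ (Fin N)) :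
    mulE (A + B) v = mulE A v + mulE B v := by
  simp [mulE, map_add]

lemma mulE_smul (c : ℝ) (A : Matrix (Fin N) (Fin N) ℝ) (v : EuclideanSpace ℝ (Fin N)) :
    mulE (c • A) v = c • mulE A v := by
  simp [mulE, _root_.map_smul]

lemma mulE_coe (A : Matrix (Fin N) (Fin N) ℝ) (v : EuclideanSpace ℝ (Fin N)) :
    (mulE A v : Fin N → ℝ) = A *ᵥ (v : Fin N → ℝ) := rfl

lemma inner_mulE_eq_dot (A : Matrix (Fin N) (Fin N) ℝ) (x y : EuclideanSpace ℝ (Fin N)) :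
    ⟪x, mulE A y⟫ = (x : Fin N → ℝ) ⬝ᵥ (A *ᵥ (y : Fin N → ℝ)) := by
  simp [PiLp.inner_apply, mulE_coe, dotProduct, mul_comm]

lemma inner_mulE_left (A : Matrix (Fin N) (Fin N) ℝ) (hA : A.IsHermitian)
    (x y : EuclideanSpace ℝ (Fin N)) : ⟪mulE A x, y⟫ = ⟪x, mulE A y⟫ := by
  have hsymm : ∀ i j, A i j = A j i := fun i j => by
    have := congrFun (congrFun hA.eq j) i
    simpa [Matrix.conjTranspose_apply] using this
  simp only [PiLp.inner_apply, RCLike.inner_apply, conj_trivial, mulE_coe, Matrix.mulVec,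
    dotProduct, Finset.sum_mul, Finset.mul_sum]
  rw [Finset.sum_comm]
  exact Finset.sum_congr rfl fun j _ => Finset.sum_congr rfl fun i _ => by
    rw [hsymm i j]; ring

lemma inner_mulE_self_nonneg {A : Matrix (Fin N) (Fin N) ℝ} (hA : A.PosSemidef)
    (x : EuclideanSpace ℝ (Fin N)) : 0 ≤ ⟪x, mulE A x⟫ := by
  rw [inner_mulE_eq_dot]
  simpa using hA.dotProduct_mulVec_nonneg (x : Fin N → ℝ)

lemma posDef_reg {A : Matrix (Fin N) (Fin N) ℝ} (hA : A.PosSemidef) {α : ℝ} (hα : 0 < α) :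
    (A + α • (1 : Matrix (Fin N) (Fin N) ℝ)).PosDef := by
  refine Matrix.PosDef.posSemidef_add hA ?_
  rw [Matrix.smul_one_eq_diagonal]
  exact Matrix.posDef_diagonal_iff.mpr fun _ => hα

lemma mulE_inv_cancel {B : Matrix (Fin N) (Fin N) ℝ} (hB : B.PosDef)
    (v : EuclideanSpace ℝ (Fin N)) : mulE B (mulE B⁻¹ v) = v := by
  rw [← mulE_mul, Matrix.mul_nonsing_inv _ ((Matrix.isUnit_iff_isUnit_det B).mp hB.isUnit),
    mulE_one]

lemma mulE_inv_cancel' {B : Matrix (Fin N) (Fin N) ℝ} (hB : B.PosDef)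
    (v : EuclideanSpace ℝ (Fin N)) : mulE B⁻¹ (mulE B v) = v := by
  rw [← mulE_mul, Matrix.nonsing_inv_mul _ ((Matrix.isUnit_iff_isUnit_det B).mp hB.isUnit),
    mulE_one]

lemma norm_mulE_inv_le {A : Matrix (Fin N) (Fin N) ℝ} (hA : A.PosSemidef) {α : ℝ} (hα : 0 < α)
    (v : EuclideanSpace ℝ (Fin N)) :
    ‖mulE (A + α • (1 : Matrix (Fin N) (Fin N) ℝ))⁻¹ v‖ ≤ ‖v‖ / α := by
  set B := A + α • (1 : Matrix (Fin N) (Fin N) ℝ) with hBdef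
  have hB := posDef_reg hA hα
  set u := mulE B⁻¹ v with hu
  have hv : mulE B u = v := mulE_inv_cancel hB v
  have h1 : α * ‖u‖ ^ 2 ≤ ⟪u, v⟫ := by
    have h : ⟪u, v⟫ = ⟪u, mulE A u⟫ + α * ⟪u, u⟫ := by
      rw [← hv, hBdef, mulE_add, mulE_smul, mulE_one, inner_add_right, real_inner_smul_right]
    rw [h, real_inner_self_eq_norm_sq]
    nlinarith [inner_mulE_self_nonneg hA u]
  have h2 : ⟪u, v⟫ ≤ ‖u‖ * ‖v‖ := real_inner_le_norm u v
  rw [le_div_iff₀ hα]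
  rcases eq_or_lt_of_le (norm_nonneg u) with h0 | h0
  · rw [← h0]; simpa using norm_nonneg v
  · nlinarith

lemma mem_range_of_perp_ker {A : Matrix (Fin N) (Fin N) ℝ} (hA : A.PosSemidef)
    (z : EuclideanSpace ℝ (Fin N)) (hz : ∀ k, mulE A k = 0 → ⟪z, k⟫ = 0) :
    ∃ w, mulE A w = z := by
  set R := LinearMap.range (Matrix.toEuclideanLin A) with hR
  obtain ⟨p, hp, z', hz', hsum⟩ := R.exists_add_mem_mem_orthogonal z
  have hker : mulE A z' = 0 := by
    have h1 : ⟪mulE A z', mulE A z'⟫ = 0 := by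
      rw [inner_mulE_left A hA.isHermitian, real_inner_comm]
      have : mulE A (mulE A z') ∈ R := LinearMap.mem_range_self _ _
      exact (Submodule.mem_orthogonal R z').mp hz' _ this
    exact inner_self_eq_zero.mp h1
  have hz0 : ⟪z, z'⟫ = 0 := hz z' hker
  have hpz' : ⟪p, z'⟫ = 0 := by
    exact (Submodule.mem_orthogonal R z').mp hz' p hp
  have : z' = 0 := by
    have : ⟪z', z'⟫ = 0 := by
      have := hz0
      rw [hsum, inner_add_left, hpz'] at this
      simpa using this
    exact inner_self_eq_zero.mp this
  obtain ⟨w, hw⟩ := hp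
  exact ⟨w, by rw [hsum, this, add_zero]; exact hw⟩

lemma mulE_addv (M : Matrix (Fin N) (Fin N) ℝ) (x y : EuclideanSpace ℝ (Fin N)) :
    mulE M (x + y) = mulE M x + mulE M y := map_add (Matrix.toEuclideanLin M) x y

lemma mulE_subv (M : Matrix (Fin N) (Fin N) ℝ) (x y : EuclideanSpace ℝ (Fin N)) :
    mulE M (x - y) = mulE M x - mulE M y := map_sub (Matrix.toEuclideanLin M) x y

lemma mulE_smulv (M : Matrix (Fin N) (Fin N) ℝ) (c : ℝ) (x : EuclideanSpace ℝ (Fin N)) :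
    mulE M (c • x) = c • mulE M x := _root_.map_smul (Matrix.toEuclideanLin M) c x

/-- **Lavrentiev regularization.** For a symmetric positive semidefinite `A`
with `A q = f` solvable, each regularized system `(A + α I) q = f + α q⁰` (`α > 0`) has a
unique solution `q^α = (A + α I)⁻¹ (f + α q⁰)`, and `q^α → q_H⁰` as `α → 0⁺`, where `q_H⁰` is
the solution of `A q = f` closest in Euclidean norm to `q⁰`. -/
theorem lavrentiev_regularization_tendsto_normal_solution
    (N : ℕ) (A : Matrix (Fin N) (Fin N) ℝ) (hA : A.PosSemidef)
    (f : EuclideanSpace ℝ (Fin N)) (hsolv : ∃ q, mulE A q = f)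
    (q0 qn : EuclideanSpace ℝ (Fin N))
    (hqn : mulE A qn = f ∧ ∀ p, mulE A p = f → ‖qn - q0‖ ≤ ‖p - q0‖) :
    (∀ α : ℝ, 0 < α →
        ∃! q : EuclideanSpace ℝ (Fin N),
          mulE (A + α • (1 : Matrix (Fin N) (Fin N) ℝ)) q = f + α • q0) ∧
      (∀ α : ℝ, 0 < α → ∀ q : EuclideanSpace ℝ (Fin N),
        mulE (A + α • (1 : Matrix (Fin N) (Fin N) ℝ)) q = f + α • q0 ↔
          q = mulE ((A + α • (1 : Matrix (Fin N) (Fin N) ℝ))⁻¹) (f + α • q0)) ∧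
      Filter.Tendsto
        (fun α : ℝ => mulE ((A + α • (1 : Matrix (Fin N) (Fin N) ℝ))⁻¹) (f + α • q0))
        (nhdsWithin 0 (Set.Ioi 0)) (nhds qn) := by
  obtain ⟨hqnf, hmin⟩ := hqn
  have hBpd : ∀ α : ℝ, 0 < α → (A + α • (1 : Matrix (Fin N) (Fin N) ℝ)).PosDef :=
    fun α hα => posDef_reg hA hα
  have hiff : ∀ α : ℝ, 0 < α → ∀ q : EuclideanSpace ℝ (Fin N),
      mulE (A + α • (1 : Matrix (Fin N) (Fin N) ℝ)) q = f + α • q0 ↔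
        q = mulE ((A + α • (1 : Matrix (Fin N) (Fin N) ℝ))⁻¹) (f + α • q0) := by
    intro α hα q
    constructor
    · intro h; rw [← h, mulE_inv_cancel' (hBpd α hα)]
    · intro h; rw [h, mulE_inv_cancel (hBpd α hα)]
  refine ⟨fun α hα => ⟨_, (hiff α hα _).mpr rfl, fun q hq => (hiff α hα q).mp hq⟩, hiff, ?_⟩
  -- orthogonality of q0 - qn to the kernel
  have horth : ∀ k, mulE A k = 0 → ⟪q0 - qn, k⟫ = 0 := by
    intro k hk
    set c := ⟪qn - q0, k⟫ with hc
    set K := ‖k‖ ^ 2 with hKdef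
    have hKnn : 0 ≤ K := by positivity
    have ht : ∀ t : ℝ, 0 ≤ 2 * t * c + t ^ 2 * K := by
      intro t
      have hsol : mulE A (qn + t • k) = f := by
        rw [mulE_addv, mulE_smulv, hk, hqnf, smul_zero, add_zero]
      have h1 := hmin _ hsol
      have h2 : ‖qn - q0‖ ^ 2 ≤ ‖qn + t • k - q0‖ ^ 2 := by
        apply pow_le_pow_left₀ (norm_nonneg _) h1
      have hexp : qn + t • k - q0 = (qn - q0) + t • k := by abel
      rw [hexp, norm_add_sq_real, real_inner_smul_right, norm_smul, Real.norm_eq_abs,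
        mul_pow] at h2
      nlinarith [sq_abs t]
    have hd : (0:ℝ) < K + 1 := by linarith
    have h := ht (-(c / (K + 1)))
    have hcancel : (2 * (-(c / (K + 1))) * c + (-(c / (K + 1))) ^ 2 * K) * (K + 1) ^ 2
        = -(c ^ 2) * (K + 2) := by
      field_simp
      ring
    have h' : 0 ≤ -(c ^ 2) * (K + 2) := by
      rw [← hcancel]
      exact mul_nonneg h (by positivity)
    have hc2 : c ^ 2 = 0 := le_antisymm (by nlinarith) (sq_nonneg c)
    have hc0 : c = 0 := by
      have := sq_eq_zero_iff.mp hc2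
      exact this
    have : q0 - qn = -(qn - q0) := by abel
    rw [this, inner_neg_left, ← hc, hc0, neg_zero]
  obtain ⟨w, hw⟩ := mem_range_of_perp_ker hA (q0 - qn) horth
  rw [tendsto_iff_norm_sub_tendsto_zero]
  have hlim : Filter.Tendsto (fun α : ℝ => 2 * ‖w‖ * α) (nhdsWithin 0 (Set.Ioi 0)) (nhds 0) := by
    have h : Filter.Tendsto (fun α : ℝ => 2 * ‖w‖ * α) (nhds 0) (nhds 0) := by
      exact (continuous_mul_left (2 * ‖w‖)).tendsto' 0 0 (by simp)
    exact h.mono_left nhdsWithin_le_nhds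
  refine squeeze_zero' (Filter.Eventually.of_forall fun α => norm_nonneg _) ?_ hlim
  filter_upwards [self_mem_nhdsWithin] with α hα
  have hαpos : (0:ℝ) < α := hα
  set B := A + α • (1 : Matrix (Fin N) (Fin N) ℝ) with hBdef
  have hBq : mulE B qn = f + α • qn := by
    rw [hBdef, mulE_add, mulE_smul, mulE_one, hqnf]
  have hdec : f + α • q0 = mulE B qn + α • (q0 - qn) := by
    rw [hBq, smul_sub]; abel
  have hg : mulE B⁻¹ (f + α • q0) = qn + α • mulE B⁻¹ (q0 - qn) := by
    rw [hdec, mulE_addv, mulE_smulv, mulE_inv_cancel' (hBpd α hαpos)]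
  have hq0qn : mulE B⁻¹ (q0 - qn) = w - α • mulE B⁻¹ w := by
    have h1 : q0 - qn = mulE B w - α • w := by
      rw [← hw, hBdef, mulE_add, mulE_smul, mulE_one]; abel
    rw [h1, mulE_subv, mulE_smulv, mulE_inv_cancel' (hBpd α hαpos)]
  calc ‖mulE B⁻¹ (f + α • q0) - qn‖ = α * ‖w - α • mulE B⁻¹ w‖ := by
        rw [hg, hq0qn, add_sub_cancel_left, norm_smul, Real.norm_eq_abs, abs_of_pos hαpos]
    _ ≤ α * (2 * ‖w‖) := by
        apply mul_le_mul_of_nonneg_left ?_ hαpos.le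
        calc ‖w - α • mulE B⁻¹ w‖ ≤ ‖w‖ + ‖α • mulE B⁻¹ w‖ := norm_sub_le _ _
          _ = ‖w‖ + α * ‖mulE B⁻¹ w‖ := by
              rw [norm_smul, Real.norm_eq_abs, abs_of_pos hαpos]
          _ ≤ ‖w‖ + α * (‖w‖ / α) := by
              have hb := norm_mulE_inv_le hA hαpos w
              exact add_le_add le_rfl (mul_le_mul_of_nonneg_left hb hαpos.le)
          _ = 2 * ‖w‖ := by field_simp; ring
    _ = 2 * ‖w‖ * α := by ring
end

section
/- Under the hypotheses and conclusion of the Tikhonov error estimate ‖q⁰_np − q^α_{hδ}‖ ≤ c₁ α + (h/α)(‖A q⁰_np − f‖ + 2 c₂² α²)^{1/2} + α^{-1/2}(c₃ h + δ), suppose h ≤ ε and δ ≤ ε for a small ε > 0. Then: (i) if the system A q = f is solvable (so ‖A q⁰_np − f‖ = 0), the choice α = ε^{2/3} yields a constant C with ‖q⁰_np − q^α_{hδ}‖ ≤ C ε^{2/3}; (ii) if A q = f is not solvable, the choice α = ε^{1/2} yields a constant C with ‖q⁰_np − q^α_{hδ}‖ ≤ C ε^{1/2}. -/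
open Matrix
open scoped Matrix.Norms.L2Operator

/-- **corollary of the Tikhonov error estimate.** Under the hypotheses and
conclusion of the Tikhonov error estimate, suppose `h ≤ ε` and `δ ≤ ε` for a small `ε > 0`.
(i) If `A q = f` is solvable, the choice `α = ε^(2/3)` yields a constant `C` with
`‖q⁰_np - q^α_{hδ}‖ ≤ C ε^(2/3)`; (ii) if `A q = f` is not solvable, the choice
`α = ε^(1/2)` yields a constant `C` with `‖q⁰_np - q^α_{hδ}‖ ≤ C ε^(1/2)`. -/
theorem tikhonov_parameter_choice
    (K N : ℕ) (A : Matrix (Fin K) (Fin N) ℝ) (f : EuclideanSpace ℝ (Fin K))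
    (q0 q0np : EuclideanSpace ℝ (Fin N))
    (hps : ∀ p : EuclideanSpace ℝ (Fin N), ‖mulE A q0np - f‖ ^ 2 ≤ ‖mulE A p - f‖ ^ 2)
    (hnp : ∀ q : EuclideanSpace ℝ (Fin N),
      (∀ p : EuclideanSpace ℝ (Fin N), ‖mulE A q - f‖ ^ 2 ≤ ‖mulE A p - f‖ ^ 2) →
        ‖q0np - q0‖ ≤ ‖q - q0‖)
    (c₁ c₂ c₃ : ℝ) (hc₁ : 0 ≤ c₁) (hc₂ : 0 ≤ c₂) (hc₃ : 0 ≤ c₃)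
    (hest : ∀ α h δ : ℝ, 0 < α → 0 ≤ h → 0 ≤ δ →
      ∀ (Ah : Matrix (Fin K) (Fin N) ℝ) (fδ : EuclideanSpace ℝ (Fin K)),
        ‖Ah - A‖ ≤ h → ‖fδ - f‖ ≤ δ →
        ∀ q : EuclideanSpace ℝ (Fin N),
          mulE (Ahᵀ * Ah + α • (1 : Matrix (Fin N) (Fin N) ℝ)) q
              = mulE Ahᵀ fδ + α • q0 →
            ‖q0np - q‖ ≤ c₁ * α
              + (h / α) * Real.sqrt (‖mulE A q0np - f‖ + 2 * c₂ ^ 2 * α ^ 2)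
              + (c₃ * h + δ) / Real.sqrt α) :
    ((∃ s, mulE A s = f) →
      ∃ C ε₀ : ℝ, 0 < ε₀ ∧
        ∀ ε : ℝ, 0 < ε → ε ≤ ε₀ →
          ∀ h δ : ℝ, 0 ≤ h → h ≤ ε → 0 ≤ δ → δ ≤ ε →
            ∀ (Ah : Matrix (Fin K) (Fin N) ℝ) (fδ : EuclideanSpace ℝ (Fin K)),
              ‖Ah - A‖ ≤ h → ‖fδ - f‖ ≤ δ →
              ∀ q : EuclideanSpace ℝ (Fin N),
                mulE (Ahᵀ * Ah + ε ^ ((2 : ℝ)/3) • (1 : Matrix (Fin N) (Fin N) ℝ)) q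
                    = mulE Ahᵀ fδ + ε ^ ((2 : ℝ)/3) • q0 →
                  ‖q0np - q‖ ≤ C * ε ^ ((2 : ℝ)/3)) ∧
    ((¬ ∃ s, mulE A s = f) →
      ∃ C ε₀ : ℝ, 0 < ε₀ ∧
        ∀ ε : ℝ, 0 < ε → ε ≤ ε₀ →
          ∀ h δ : ℝ, 0 ≤ h → h ≤ ε → 0 ≤ δ → δ ≤ ε →
            ∀ (Ah : Matrix (Fin K) (Fin N) ℝ) (fδ : EuclideanSpace ℝ (Fin K)),
              ‖Ah - A‖ ≤ h → ‖fδ - f‖ ≤ δ →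
              ∀ q : EuclideanSpace ℝ (Fin N),
                mulE (Ahᵀ * Ah + ε ^ ((1 : ℝ)/2) • (1 : Matrix (Fin N) (Fin N) ℝ)) q
                    = mulE Ahᵀ fδ + ε ^ ((1 : ℝ)/2) • q0 →
                  ‖q0np - q‖ ≤ C * ε ^ ((1 : ℝ)/2)) := by
  constructor
  · -- solvable case
    rintro ⟨s, hs⟩
    have hM : ‖mulE A q0np - f‖ = 0 := by
      have := hps s
      rw [hs, sub_self, norm_zero] at this
      nlinarith [norm_nonneg (mulE A q0np - f)]
    refine ⟨c₁ + Real.sqrt 2 * c₂ + c₃ + 1, 1, one_pos, ?_⟩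
    intro ε hε hε1 h δ hh hhε hδ hδε Ah fδ hAh hfδ q heq
    set α : ℝ := ε ^ ((2 : ℝ)/3) with hα_def
    have hα : 0 < α := Real.rpow_pos_of_pos hε _
    have bound := hest α h δ hα hh hδ Ah fδ hAh hfδ q heq
    rw [hM, zero_add] at bound
    have h2 : Real.sqrt (2 * c₂ ^ 2 * α ^ 2) = Real.sqrt 2 * (c₂ * α) := by
      rw [show 2 * c₂ ^ 2 * α ^ 2 = (Real.sqrt 2 * (c₂ * α)) ^ 2 by
        rw [mul_pow, Real.sq_sqrt (by norm_num : (0:ℝ) ≤ 2)]; ring,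
        Real.sqrt_sq (by positivity)]
    rw [h2] at bound
    have hεα : ε ≤ α := by
      have := Real.rpow_le_rpow_of_exponent_ge hε hε1 (by norm_num : (2:ℝ)/3 ≤ 1)
      rwa [Real.rpow_one] at this
    have hsq : Real.sqrt α = ε ^ ((1 : ℝ)/3) := by
      rw [hα_def, Real.sqrt_eq_rpow, ← Real.rpow_mul hε.le]; norm_num
    have hprod : α * Real.sqrt α = ε := by
      rw [hsq, hα_def, ← Real.rpow_add hε]; norm_num
    have t2 : (h / α) * (Real.sqrt 2 * (c₂ * α)) = Real.sqrt 2 * c₂ * h := by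
      field_simp
    rw [t2] at bound
    have t2b : Real.sqrt 2 * c₂ * h ≤ Real.sqrt 2 * c₂ * α := by
      have : (0:ℝ) ≤ Real.sqrt 2 * c₂ := by positivity
      nlinarith
    have t3 : (c₃ * h + δ) / Real.sqrt α ≤ (c₃ + 1) * α := by
      rw [div_le_iff₀ (by positivity : (0:ℝ) < Real.sqrt α)]
      calc c₃ * h + δ ≤ c₃ * ε + ε := by nlinarith
        _ = (c₃ + 1) * ε := by ring
        _ = (c₃ + 1) * (α * Real.sqrt α) := by rw [hprod]
        _ = (c₃ + 1) * α * Real.sqrt α := by ring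
    calc ‖q0np - q‖ ≤ c₁ * α + Real.sqrt 2 * c₂ * h + (c₃ * h + δ) / Real.sqrt α := bound
      _ ≤ c₁ * α + Real.sqrt 2 * c₂ * α + (c₃ + 1) * α := by linarith
      _ = (c₁ + Real.sqrt 2 * c₂ + c₃ + 1) * α := by ring
  · -- non-solvable case
    intro _
    set M : ℝ := ‖mulE A q0np - f‖ with hM_def
    have hM : 0 ≤ M := norm_nonneg _
    refine ⟨c₁ + Real.sqrt (M + 2 * c₂ ^ 2) + c₃ + 1, 1, one_pos, ?_⟩
    intro ε hε hε1 h δ hh hhε hδ hδε Ah fδ hAh hfδ q heq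
    set α : ℝ := ε ^ ((1 : ℝ)/2) with hα_def
    have hα : 0 < α := Real.rpow_pos_of_pos hε _
    have bound := hest α h δ hα hh hδ Ah fδ hAh hfδ q heq
    have hα2 : α ^ 2 = ε := by
      rw [hα_def, ← Real.rpow_natCast (ε ^ ((1:ℝ)/2)) 2, ← Real.rpow_mul hε.le]
      norm_num
    have hεα : ε ≤ α := by
      have := Real.rpow_le_rpow_of_exponent_ge hε hε1 (by norm_num : (1:ℝ)/2 ≤ 1)
      rwa [Real.rpow_one] at this
    have hsq : Real.sqrt α = ε ^ ((1 : ℝ)/4) := by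
      rw [hα_def, Real.sqrt_eq_rpow, ← Real.rpow_mul hε.le]; norm_num
    have hprodε : ε ≤ α * Real.sqrt α := by
      rw [hsq, hα_def, ← Real.rpow_add hε]
      have := Real.rpow_le_rpow_of_exponent_ge hε hε1
        (by norm_num : (1:ℝ)/2 + 1/4 ≤ 1)
      rwa [Real.rpow_one] at this
    have t2 : (h / α) * Real.sqrt (M + 2 * c₂ ^ 2 * α ^ 2)
        ≤ Real.sqrt (M + 2 * c₂ ^ 2) * α := by
      have hs1 : Real.sqrt (M + 2 * c₂ ^ 2 * α ^ 2) ≤ Real.sqrt (M + 2 * c₂ ^ 2) := by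
        apply Real.sqrt_le_sqrt
        have : α ^ 2 ≤ 1 := by rw [hα2]; exact hε1
        nlinarith
      have hha : h / α ≤ α := by
        rw [div_le_iff₀ hα, ← sq]
        rw [hα2]; exact hhε
      calc (h / α) * Real.sqrt (M + 2 * c₂ ^ 2 * α ^ 2)
          ≤ α * Real.sqrt (M + 2 * c₂ ^ 2) := by
            apply mul_le_mul hha hs1 (Real.sqrt_nonneg _) hα.le
        _ = Real.sqrt (M + 2 * c₂ ^ 2) * α := by ring
    have t3 : (c₃ * h + δ) / Real.sqrt α ≤ (c₃ + 1) * α := by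
      rw [div_le_iff₀ (by positivity : (0:ℝ) < Real.sqrt α)]
      calc c₃ * h + δ ≤ c₃ * ε + ε := by nlinarith
        _ = (c₃ + 1) * ε := by ring
        _ ≤ (c₃ + 1) * (α * Real.sqrt α) := by
            apply mul_le_mul_of_nonneg_left hprodε (by linarith)
        _ = (c₃ + 1) * α * Real.sqrt α := by ring
    calc ‖q0np - q‖ ≤ c₁ * α + (h / α) * Real.sqrt (M + 2 * c₂ ^ 2 * α ^ 2)
          + (c₃ * h + δ) / Real.sqrt α := bound
      _ ≤ c₁ * α + Real.sqrt (M + 2 * c₂ ^ 2) * α + (c₃ + 1) * α := by linarith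
      _ = (c₁ + Real.sqrt (M + 2 * c₂ ^ 2) + c₃ + 1) * α := by ring
end

section
/- A complex N×N matrix A is normal (A A* = A* A) if and only if the multiset of its singular values coincides with the multiset of the absolute values of its eigenvalues; that is, when both the singular values σ₁ ≥ … ≥ σ_N and the absolute values of the eigenvalues |λ₁| ≥ … ≥ |λ_N| (counted with algebraic multiplicity) are arranged in non-increasing order, A is normal if and only if |λ_i(A)| = σ_i(A) for all i = 1, …, N. -/
open Matrix Module Submodule

lemma schur_operator : ∀ (m : ℕ) (E : Type) [NormedAddCommGroup E] [InnerProductSpace ℂ E]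
    [FiniteDimensional ℂ E] (hm : Module.finrank ℂ E = m) (f : E →ₗ[ℂ] E),
    ∃ b : OrthonormalBasis (Fin m) ℂ E, ∀ i j : Fin m, j < i →
      (inner ℂ (b i) (f (b j)) : ℂ) = 0 := by
  intro m
  induction m with
  | zero =>
    intro E _ _ _ hm f
    exact ⟨(stdOrthonormalBasis ℂ E).reindex (finCongr hm), fun i => i.elim0⟩
  | succ m ih =>
    intro E _ _ _ hm f
    have : Nontrivial E := Module.nontrivial_of_finrank_pos (R := ℂ) (by omega)
    obtain ⟨μ, hμ⟩ := Module.End.exists_eigenvalue (LinearMap.adjoint f : Module.End ℂ E)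
    obtain ⟨w, hw⟩ := hμ.exists_hasEigenvector
    set u : E := (‖w‖⁻¹ : ℝ) • w with hu_def
    have hu : ‖u‖ = 1 := norm_smul_inv_norm hw.2
    have hu0 : u ≠ 0 := by intro h; rw [h] at hu; simp at hu
    have hadj : LinearMap.adjoint f u = μ • u := by
      rw [hu_def, LinearMap.map_smul_of_tower, hw.apply_eq_smul, smul_comm]
    set W : Submodule ℂ E := (ℂ ∙ u)ᗮ with hW_def
    have hWinv : ∀ x ∈ W, f x ∈ W := by
      intro x hx
      rw [Submodule.mem_orthogonal]
      intro y hy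
      obtain ⟨c, rfl⟩ := Submodule.mem_span_singleton.mp hy
      have h1 : (inner ℂ u x : ℂ) = 0 := hx u (Submodule.mem_span_singleton_self u)
      have : (inner ℂ u (f x) : ℂ) = 0 := by
        rw [← LinearMap.adjoint_inner_left, hadj, inner_smul_left, h1, mul_zero]
      rw [inner_smul_left, this, mul_zero]
    have hWrank : finrank ℂ W = m := by
      haveI : Fact (finrank ℂ E = m + 1) := ⟨hm⟩
      simpa using finrank_orthogonal_span_singleton hu0
    obtain ⟨b', hb'⟩ := ih W hWrank (f.restrict hWinv)
    set v : Fin (m + 1) → E := Fin.snoc (fun i => (b' i : E)) u with hv_def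
    have hvlast : v (Fin.last m) = u := by simp [hv_def]
    have hvcast : ∀ i : Fin m, v i.castSucc = (b' i : E) := by intro i; simp [hv_def]
    have hub : ∀ k : Fin m, (inner ℂ u ((b' k : E)) : ℂ) = 0 :=
      fun k => (b' k).2 u (Submodule.mem_span_singleton_self u)
    have hon : Orthonormal ℂ v := by
      rw [orthonormal_iff_ite]
      intro i j
      induction i using Fin.lastCases with
      | last =>
        induction j using Fin.lastCases with
        | last => simp [hvlast, @inner_self_eq_norm_sq_to_K ℂ, hu]
        | cast j => simp [hvlast, hvcast, hub j, (Fin.castSucc_lt_last j).ne']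
      | cast i =>
        induction j using Fin.lastCases with
        | last =>
          have : (inner ℂ ((b' i : E)) u : ℂ) = 0 := by
            rw [← inner_conj_symm, hub i, map_zero]
          simp [hvlast, hvcast, this, (Fin.castSucc_lt_last i).ne]
        | cast j =>
          have := orthonormal_iff_ite.mp b'.orthonormal i j
          rw [Submodule.coe_inner] at this
          simpa [hvcast, Fin.castSucc_inj] using this
    have hcard : Fintype.card (Fin (m + 1)) = finrank ℂ E := by simp [hm]
    set bas := basisOfLinearIndependentOfCardEqFinrank hon.linearIndependent hcard with hbas
    have hbasv : ⇑bas = v := coe_basisOfLinearIndependentOfCardEqFinrank _ _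
    refine ⟨bas.toOrthonormalBasis (by rwa [hbasv]), ?_⟩
    intro i j hij
    rw [Basis.coe_toOrthonormalBasis, hbasv]
    induction j using Fin.lastCases with
    | last => exact absurd hij (by simp [Fin.lt_iff_val_lt_val, Fin.last]; omega)
    | cast j =>
      have hfW : f (v j.castSucc) ∈ W := by
        rw [hvcast]; exact hWinv _ (b' j).2
      have hfval : f (v j.castSucc) = ((f.restrict hWinv) (b' j) : E) := by
        rw [hvcast]; rfl
      induction i using Fin.lastCases with
      | last =>
        rw [hvlast]
        exact hfW u (Submodule.mem_span_singleton_self u)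
      | cast i =>
        rw [hvcast, hfval]
        have := hb' i j (by simpa [Fin.castSucc_lt_castSucc_iff] using hij)
        rw [Submodule.coe_inner] at this
        exact this

lemma schur_matrix (n : ℕ) (A : Matrix (Fin n) (Fin n) ℂ) :
    ∃ U ∈ Matrix.unitaryGroup (Fin n) ℂ, ∃ T : Matrix (Fin n) (Fin n) ℂ,
      T.BlockTriangular id ∧ A = U * T * star U := by
  obtain ⟨b, hb⟩ := schur_operator n (EuclideanSpace ℂ (Fin n)) finrank_euclideanSpace_fin
    (Matrix.toEuclideanLin A)
  set U : Matrix (Fin n) (Fin n) ℂ :=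
    (EuclideanSpace.basisFun (Fin n) ℂ).toBasis.toMatrix b.toBasis with hU_def
  have hU : U ∈ Matrix.unitaryGroup (Fin n) ℂ :=
    (EuclideanSpace.basisFun (Fin n) ℂ).toMatrix_orthonormalBasis_mem_unitary b
  have hUentry : ∀ i j, U i j = b j i := fun i j => rfl
  refine ⟨U, hU, star U * A * U, ?_, ?_⟩
  · intro i j hij
    have : (star U * A * U) i j = dotProduct (star ⇑(b i)) (A *ᵥ ⇑(b j)) := by
      rw [Matrix.mul_assoc, Matrix.mul_apply]
      simp only [Matrix.star_apply, hUentry, Matrix.mul_apply, dotProduct,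
        Matrix.mulVec, Pi.star_apply]
    rw [this]
    have h2 := hb i j hij
    rw [EuclideanSpace.inner_eq_star_dotProduct] at h2
    rw [Matrix.toEuclideanLin_apply] at h2
    rw [dotProduct_comm] at h2
    exact h2
  · rw [← Matrix.mul_assoc, ← Matrix.mul_assoc, Matrix.mem_unitaryGroup_iff.mp hU,
      Matrix.one_mul, Matrix.mul_assoc, Matrix.mem_unitaryGroup_iff.mp hU, Matrix.mul_one]

lemma charpoly_conj {n : ℕ} (U V A : Matrix (Fin n) (Fin n) ℂ) (hUV : U * V = 1) :
    (U * A * V).charpoly = A.charpoly := by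
  have hVU : V * U = 1 := by
    have := mul_eq_one_comm.mp hUV
    exact this
  let m : Matrix (Fin n) (Fin n) ℂ →+* Matrix (Fin n) (Fin n) (Polynomial ℂ) :=
    (Polynomial.C : ℂ →+* Polynomial ℂ).mapMatrix
  have hcm : Matrix.charmatrix (U * A * V) = m U * Matrix.charmatrix A * m V := by
    rw [Matrix.charmatrix, Matrix.charmatrix, Matrix.mul_sub, Matrix.sub_mul]
    congr 1
    · have hsc : Commute (Matrix.scalar (Fin n) (Polynomial.X : Polynomial ℂ)) (m V) :=
        Matrix.scalar_commute _ (fun r' => Polynomial.commute_X r') _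
      rw [Matrix.mul_assoc, hsc.eq, ← Matrix.mul_assoc, ← _root_.map_mul, hUV,
        _root_.map_one, Matrix.one_mul]
    · rw [← _root_.map_mul, ← _root_.map_mul]
  rw [Matrix.charpoly, Matrix.charpoly, hcm, Matrix.det_mul, Matrix.det_mul]
  have : (m U).det * (m V).det = 1 := by
    rw [← Matrix.det_mul, ← _root_.map_mul, hUV, _root_.map_one, Matrix.det_one]
  calc (m U).det * Matrix.det (Matrix.charmatrix A) * (m V).det
      = Matrix.det (Matrix.charmatrix A) * ((m U).det * (m V).det) := by ring
    _ = _ := by rw [this, mul_one]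

lemma roots_charpoly_triangular {n : ℕ} (T : Matrix (Fin n) (Fin n) ℂ)
    (hT : T.BlockTriangular id) :
    T.charpoly.roots = Multiset.map (fun i => T i i) Finset.univ.val := by
  rw [Matrix.charpoly_of_upperTriangular T hT]
  have : ∏ i : Fin n, (Polynomial.X - Polynomial.C (T i i)) =
      (Multiset.map (fun a => Polynomial.X - Polynomial.C a)
        (Multiset.map (fun i => T i i) Finset.univ.val)).prod := by
    rw [Multiset.map_map]
    rfl
  rw [this, Polynomial.roots_multiset_prod_X_sub_C]

lemma roots_charpoly_hermitian {n : ℕ} (B : Matrix (Fin n) (Fin n) ℂ) (hB : B.IsHermitian) :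
    B.charpoly.roots =
      Multiset.map (fun i : Fin n => ((hB.eigenvalues i : ℝ) : ℂ)) Finset.univ.val := by
  have hU := (Matrix.IsHermitian.eigenvectorUnitary hB).2
  have h1 : B.charpoly = (Matrix.diagonal ((↑) ∘ hB.eigenvalues) :
      Matrix (Fin n) (Fin n) ℂ).charpoly := by
    conv_lhs => rw [hB.spectral_theorem]
    exact charpoly_conj _ _ _ (Matrix.mem_unitaryGroup_iff.mp hU)
  rw [h1, roots_charpoly_triangular _ (Matrix.blockTriangular_diagonal _)]
  congr 1
  ext i
  simp

lemma triangular_normal_diag {n : ℕ} (T : Matrix (Fin n) (Fin n) ℂ) (hT : T.BlockTriangular id)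
    (hN : T * Tᴴ = Tᴴ * T) : ∀ i j : Fin n, i ≠ j → T i j = 0 := by
  suffices H : ∀ (m : ℕ) (i : Fin n), (i : ℕ) < m → ∀ j, i ≠ j → T i j = 0 by
    intro i j hij; exact H ((i : ℕ) + 1) i (Nat.lt_succ_self _) j hij
  intro m
  induction m with
  | zero => intro i h; omega
  | succ m IHm =>
    intro i hi j hij
    have IH : ∀ k : Fin n, k < i → ∀ j', k ≠ j' → T k j' = 0 := by
      intro k hk
      exact IHm k (by have := Fin.lt_iff_val_lt_val.mp hk; omega)
    -- column entries: for any k ≠ i, T k i = 0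
    have hcol : ∀ k : Fin n, k ≠ i → T k i = 0 := by
      intro k hk
      rcases lt_or_gt_of_ne hk with h | h
      · exact IH k h i hk
      · exact hT h
    have hdiag := congrFun (congrFun hN i) i
    rw [Matrix.mul_apply, Matrix.mul_apply] at hdiag
    simp only [Matrix.conjTranspose_apply] at hdiag
    have hrhs : ∑ k, star (T k i) * T k i = star (T i i) * T i i := by
      apply Finset.sum_eq_single
      · intro k _ hk
        rw [hcol k hk, star_zero, zero_mul]
      · intro h; exact absurd (Finset.mem_univ i) h
    rw [hrhs] at hdiag
    have hreal : ∑ k, Complex.normSq (T i k) = Complex.normSq (T i i) := by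
      have : ∑ k, (Complex.normSq (T i k) : ℂ) = (Complex.normSq (T i i) : ℂ) := by
        simpa only [RCLike.star_def, Complex.mul_conj, ← Complex.normSq_eq_conj_mul_self] using hdiag
      exact_mod_cast this
    have hzero : ∑ k ∈ Finset.univ.erase i, Complex.normSq (T i k) = 0 := by
      have := Finset.add_sum_erase Finset.univ (fun k => Complex.normSq (T i k))
        (Finset.mem_univ i)
      linarith [hreal, this]
    have := (Finset.sum_eq_zero_iff_of_nonneg
      (fun k _ => Complex.normSq_nonneg (T i k))).mp hzero j
        (Finset.mem_erase.mpr ⟨Ne.symm hij, Finset.mem_univ j⟩)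
    exact Complex.normSq_eq_zero.mp this

lemma trace_hermitian {n : ℕ} (B : Matrix (Fin n) (Fin n) ℂ) (hB : B.IsHermitian) :
    B.trace = ∑ i, ((hB.eigenvalues i : ℝ) : ℂ) := by
  conv_lhs => rw [hB.spectral_theorem]
  rw [Unitary.conjStarAlgAut_apply, Matrix.trace_mul_cycle, Unitary.coe_star_mul_self, Matrix.one_mul,
    Matrix.trace_diagonal]
  rfl

theorem normal_aux
    (n : ℕ) (A : Matrix (Fin n) (Fin n) ℂ) :
    A * Aᴴ = Aᴴ * A ↔
      Multiset.map (fun z : ℂ => ‖z‖) A.charpoly.roots =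
        Multiset.map
          (fun i : Fin n =>
            Real.sqrt ((Matrix.isHermitian_conjTranspose_mul_self A).eigenvalues i))
          Finset.univ.val := by
  classical
  obtain ⟨U, hU, T, hTtri, hA⟩ := schur_matrix n A
  set s : Matrix (Fin n) (Fin n) ℂ := star U with hs_def
  have hUs : U * s = 1 := Matrix.mem_unitaryGroup_iff.mp hU
  have hsU : s * U = 1 := Matrix.mem_unitaryGroup_iff'.mp hU
  have hAH : Aᴴ = U * Tᴴ * s := by
    rw [hA]
    simp only [hs_def, Matrix.conjTranspose_mul, Matrix.conjTranspose_conjTranspose,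
      Matrix.star_eq_conjTranspose, Matrix.mul_assoc]
  have hAHA : Aᴴ * A = U * (Tᴴ * T) * s := by
    rw [hAH, hA]
    calc U * Tᴴ * s * (U * T * s) = U * Tᴴ * (s * U) * T * s := by
          simp only [Matrix.mul_assoc]
      _ = U * (Tᴴ * T) * s := by rw [hsU, Matrix.mul_one]; simp only [Matrix.mul_assoc]
  have hrootsA : A.charpoly.roots = Multiset.map (fun i => T i i) Finset.univ.val := by
    rw [hA, charpoly_conj U s T hUs, roots_charpoly_triangular T hTtri]
  set hB := Matrix.isHermitian_conjTranspose_mul_self A with hB_def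
  have hrootsB : (Aᴴ * A).charpoly.roots =
      Multiset.map (fun i : Fin n => ((hB.eigenvalues i : ℝ) : ℂ)) Finset.univ.val :=
    roots_charpoly_hermitian _ hB
  constructor
  · intro h
    -- T is normal
    have hTn : T * Tᴴ = Tᴴ * T := by
      have hAAH : A * Aᴴ = U * (T * Tᴴ) * s := by
        rw [hAH]
        conv_lhs => rw [hA]
        calc U * T * s * (U * Tᴴ * s) = U * T * (s * U) * Tᴴ * s := by
              simp only [Matrix.mul_assoc]
          _ = U * (T * Tᴴ) * s := by rw [hsU, Matrix.mul_one]; simp only [Matrix.mul_assoc]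
      have := h
      rw [hAAH, hAHA] at this
      have h1 : s * (U * (T * Tᴴ) * s) * U = s * (U * (Tᴴ * T) * s) * U := by rw [this]
      calc T * Tᴴ = 1 * (T * Tᴴ) * 1 := by rw [Matrix.one_mul, Matrix.mul_one]
        _ = s * (U * (T * Tᴴ) * s) * U := by
            rw [← hsU]; simp only [Matrix.mul_assoc]
        _ = s * (U * (Tᴴ * T) * s) * U := h1
        _ = 1 * (Tᴴ * T) * 1 := by rw [← hsU]; simp only [Matrix.mul_assoc]
        _ = Tᴴ * T := by rw [Matrix.one_mul, Matrix.mul_one]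
    have hTd := triangular_normal_diag T hTtri hTn
    -- Tᴴ * T is diagonal with entries normSq (T i i)
    have hTdiag : T = Matrix.diagonal (fun i => T i i) := by
      ext i j
      by_cases hij : i = j
      · subst hij; simp
      · rw [Matrix.diagonal_apply_ne _ hij]; exact hTd i j hij
    have hTHT : Tᴴ * T = Matrix.diagonal (fun i => ((Complex.normSq (T i i) : ℝ) : ℂ)) := by
      conv_lhs => rw [hTdiag]
      rw [Matrix.diagonal_conjTranspose, Matrix.diagonal_mul_diagonal]
      congr 1
      funext i
      simp [Pi.star_apply, RCLike.star_def, ← Complex.normSq_eq_conj_mul_self]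
    have hrootsB' : (Aᴴ * A).charpoly.roots =
        Multiset.map (fun i : Fin n => ((Complex.normSq (T i i) : ℝ) : ℂ)) Finset.univ.val := by
      rw [hAHA, charpoly_conj U s _ hUs, hTHT,
        roots_charpoly_triangular _ (Matrix.blockTriangular_diagonal _)]
      congr 1
      funext i
      simp
    have hkey : Multiset.map (fun i : Fin n => ((hB.eigenvalues i : ℝ) : ℂ)) Finset.univ.val =
        Multiset.map (fun i : Fin n => ((Complex.normSq (T i i) : ℝ) : ℂ)) Finset.univ.val := by
      rw [← hrootsB, hrootsB']
    have hkey2 := congrArg (Multiset.map (fun z : ℂ => Real.sqrt z.re)) hkey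
    rw [Multiset.map_map, Multiset.map_map] at hkey2
    rw [hrootsA, Multiset.map_map]
    have hf1 : ((fun z : ℂ => ‖z‖) ∘ fun i => T i i) =
        ((fun z : ℂ => Real.sqrt z.re) ∘ fun i : Fin n => ((Complex.normSq (T i i) : ℝ) : ℂ)) :=
      funext fun i => by
        simp only [Function.comp_apply, Complex.ofReal_re, Complex.norm_def]
    have hf2 : ((fun z : ℂ => Real.sqrt z.re) ∘ fun i : Fin n => ((hB.eigenvalues i : ℝ) : ℂ)) =
        fun i : Fin n => Real.sqrt (hB.eigenvalues i) :=
      funext fun i => by simp only [Function.comp_apply, Complex.ofReal_re]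
    rw [hf1, ← hkey2, hf2]
  · intro h
    -- sum of squares argument
    have hsq := congrArg (fun M : Multiset ℝ => (Multiset.map (fun x : ℝ => x ^ 2) M).sum) h
    simp only [Multiset.map_map] at hsq
    rw [hrootsA] at hsq
    simp only [Multiset.map_map] at hsq
    have hL : (Multiset.map (((fun x : ℝ => x ^ 2) ∘ (fun z : ℂ => ‖z‖)) ∘
        fun i => T i i) Finset.univ.val).sum = ∑ i, Complex.normSq (T i i) := by
      have : (((fun x : ℝ => x ^ 2) ∘ (fun z : ℂ => ‖z‖)) ∘ fun i => T i i) =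
          fun i => Complex.normSq (T i i) := funext fun i => by simp [Complex.sq_norm]
      rw [this]
      rfl
    have hR : (Multiset.map ((fun x : ℝ => x ^ 2) ∘ fun i : Fin n =>
        Real.sqrt (hB.eigenvalues i)) Finset.univ.val).sum = ∑ i, hB.eigenvalues i := by
      have : ((fun x : ℝ => x ^ 2) ∘ fun i : Fin n => Real.sqrt (hB.eigenvalues i)) =
          fun i : Fin n => hB.eigenvalues i := funext fun i => by
        simp only [Function.comp_apply]
        exact Real.sq_sqrt (Matrix.eigenvalues_conjTranspose_mul_self_nonneg A i)
      rw [this]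
      rfl
    rw [hL, hR] at hsq
    -- trace computation
    have htr : (Aᴴ * A).trace = ∑ i, ((hB.eigenvalues i : ℝ) : ℂ) := trace_hermitian _ hB
    have htr2 : (Aᴴ * A).trace = (Tᴴ * T).trace := by
      rw [hAHA, Matrix.trace_mul_cycle, ← Matrix.mul_assoc, hsU, Matrix.one_mul]
    have htr3 : (Tᴴ * T).trace = ∑ j, ∑ k, ((Complex.normSq (T k j) : ℝ) : ℂ) := by
      rw [Matrix.trace]
      congr 1
      funext j
      rw [Matrix.diag, Matrix.mul_apply]
      congr 1
      funext k
      rw [Matrix.conjTranspose_apply, RCLike.star_def, ← Complex.normSq_eq_conj_mul_self]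
    have hsum2 : ∑ i, hB.eigenvalues i = ∑ j, ∑ k, Complex.normSq (T k j) := by
      have : (∑ i, ((hB.eigenvalues i : ℝ) : ℂ)) = ∑ j, ∑ k, ((Complex.normSq (T k j) : ℝ) : ℂ) := by
        rw [← htr, htr2, htr3]
      exact_mod_cast this
    -- off-diagonal sums vanish
    have hfull : ∑ i, Complex.normSq (T i i) = ∑ j, ∑ k, Complex.normSq (T k j) :=
      hsq.trans hsum2
    have hsplit : ∑ j, ∑ k, Complex.normSq (T k j) =
        ∑ j, (Complex.normSq (T j j) + ∑ k ∈ Finset.univ.erase j, Complex.normSq (T k j)) := by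
      congr 1
      funext j
      rw [Finset.add_sum_erase Finset.univ (fun k => Complex.normSq (T k j)) (Finset.mem_univ j)]
    have hoff : ∑ j, ∑ k ∈ Finset.univ.erase j, Complex.normSq (T k j) = 0 := by
      rw [hsplit, Finset.sum_add_distrib] at hfull
      linarith
    have hoffzero : ∀ j k : Fin n, k ≠ j → T k j = 0 := by
      intro j k hkj
      have h1 := (Finset.sum_eq_zero_iff_of_nonneg (fun j _ =>
        Finset.sum_nonneg (fun k _ => Complex.normSq_nonneg (T k j)))).mp hoff j (Finset.mem_univ j)
      have h2 := (Finset.sum_eq_zero_iff_of_nonneg (fun k _ =>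
        Complex.normSq_nonneg (T k j))).mp h1 k (Finset.mem_erase.mpr ⟨hkj, Finset.mem_univ k⟩)
      exact Complex.normSq_eq_zero.mp h2
    have hTdiag : T = Matrix.diagonal (fun i => T i i) := by
      ext i j
      by_cases hij : i = j
      · subst hij; simp
      · rw [Matrix.diagonal_apply_ne _ hij]; exact hoffzero j i hij
    have hTn : T * Tᴴ = Tᴴ * T := by
      conv_lhs => rw [hTdiag]
      conv_rhs => rw [hTdiag]
      rw [Matrix.diagonal_conjTranspose, Matrix.diagonal_mul_diagonal,
        Matrix.diagonal_mul_diagonal]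
      exact congrArg Matrix.diagonal (funext fun i => mul_comm _ _)
    rw [hAH]
    conv_lhs => rw [hA]
    calc U * T * s * (U * Tᴴ * s) = U * T * (s * U) * Tᴴ * s := by
          simp only [Matrix.mul_assoc]
      _ = U * (T * Tᴴ) * s := by rw [hsU, Matrix.mul_one]; simp only [Matrix.mul_assoc]
      _ = U * (Tᴴ * T) * s := by rw [hTn]
      _ = U * Tᴴ * (s * U) * T * s := by rw [hsU, Matrix.mul_one]; simp only [Matrix.mul_assoc]
      _ = U * Tᴴ * s * (U * T * s) := by simp only [Matrix.mul_assoc]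
      _ = U * Tᴴ * s * A := by rw [← hA]

/-- A complex `N × N` matrix is normal (`A Aᴴ = Aᴴ A`) if and only if the
multiset of absolute values of its eigenvalues (counted with algebraic multiplicity, i.e. the
roots of the characteristic polynomial) coincides with the multiset of its singular values
(the square roots of the eigenvalues of `Aᴴ A`). -/
theorem normal_iff_abs_eigenvalues_eq_singular_values
    (n : ℕ) (A : Matrix (Fin n) (Fin n) ℂ) :
    A * Aᴴ = Aᴴ * A ↔
      Multiset.map (fun z : ℂ => ‖z‖) A.charpoly.roots =
        Multiset.map
          (fun i : Fin n =>
            Real.sqrt ((Matrix.isHermitian_conjTranspose_mul_self A).eigenvalues i))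
          Finset.univ.val := normal_aux n A
end
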